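/- arXiv:1211.3256 — 2 statements merged into one kernel-verified Lean document; each statement's English description precedes it below -/
import Mathlib

section
/- Let (X,μ) be a standard measure space, 𝓡 an ergodic countable measurable equivalence relation on X, Γ an abelian second countable locally compact group, and c : 𝓡 → Γ a measurable 1-cocycle (i.e. c(x,y)·c(y,z) = c(x,z) whenever x ∼ y ∼ z). Then the asymptotic range r*(c) is a closed subgroup of Γ. -/
open MeasureTheory

open Set Filter Topology in
/-- Auxiliary recursion for the capacitability argument. -/
private noncomputable def capSeq (step : ℕ → (ℕ → ℕ) → (ℕ → ℕ)) : ℕ → ℕ → ℕ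
  | 0 => fun _ => 0
  | k + 1 => step k (capSeq step k)

open Set Filter Topology in
/-- A special case of Choquet capacitability: a Borel subset of `ℝ × ℝ` whose first
projection has positive outer measure contains a compact subset whose first projection
has positive measure. -/
private lemma cap_lemma (ν : Measure ℝ) [IsFiniteMeasure ν] {S : Set (ℝ × ℝ)}
    (hS : MeasurableSet S) (hpos : 0 < ν (Prod.fst '' S)) :
    ∃ K : Set (ℝ × ℝ), IsCompact K ∧ K ⊆ S ∧ 0 < ν (Prod.fst '' K) := by
  classical
  have han := hS.analyticSet
  rw [MeasureTheory.AnalyticSet_def] at han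
  rcases han with hemp | ⟨f, hfc, hfr⟩
  · rw [hemp] at hpos; simp at hpos
  set ε := ν (Prod.fst '' S) with hε
  have hεne : ε ≠ ⊤ := measure_ne_top ν _
  set δ := ε / 2 with hδdef
  have hδpos : 0 < δ := ENNReal.half_pos hpos.ne'
  have hδlt : δ < ε := ENNReal.half_lt_self hpos.ne' hεne
  set Dk : ℕ → (ℕ → ℕ) → Set (ℕ → ℕ) := fun k τ => {x | ∀ i < k, x i ≤ τ i} with hDk
  set J : ℕ → (ℕ → ℕ) → ENNReal := fun k τ => ν (Prod.fst '' (f '' Dk k τ)) with hJ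
  -- one recursion step
  have hstep : ∀ (k : ℕ) (τ : ℕ → ℕ), δ < J k τ →
      ∃ m, δ < J (k + 1) (Function.update τ k m) := by
    intro k τ hk
    have hmono : Monotone fun m => Dk (k + 1) (Function.update τ k m) := by
      intro m m' hmm' x hx i hi
      by_cases hik : i = k
      · subst hik
        have := hx i (Nat.lt_succ_self i)
        rw [Function.update_self] at this
        rw [Function.update_self]
        exact this.trans hmm'
      · have := hx i hi
        rwa [Function.update_of_ne hik] at this ⊢
    have hUnion : (⋃ m, Dk (k + 1) (Function.update τ k m)) = Dk k τ := by
      ext x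
      simp only [mem_iUnion, hDk, mem_setOf_eq]
      constructor
      · rintro ⟨m, hm⟩ i hi
        have := hm i (Nat.lt_succ_of_lt hi)
        rwa [Function.update_of_ne (Nat.ne_of_lt hi)] at this
      · intro hx
        refine ⟨x k, fun i hi => ?_⟩
        rcases Nat.lt_succ_iff_lt_or_eq.mp hi with hik | hik
        · rw [Function.update_of_ne (Nat.ne_of_lt hik)]
          exact hx i hik
        · subst hik; rw [Function.update_self]
    have hmono2 : Monotone fun m => Prod.fst '' (f '' Dk (k + 1) (Function.update τ k m)) :=
      fun m m' h => image_mono (image_mono (hmono h))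
    have hJeq : J k τ = ⨆ m, J (k + 1) (Function.update τ k m) := by
      simp only [hJ]
      rw [← hUnion, image_iUnion, image_iUnion, hmono2.measure_iUnion]
    rw [hJeq] at hk
    exact lt_iSup_iff.mp hk
  -- build the sequence
  set step : ℕ → (ℕ → ℕ) → (ℕ → ℕ) := fun k τ =>
    if h : ∃ m, δ < J (k + 1) (Function.update τ k m) then Function.update τ k h.choose
    else τ with hstepdef
  set Seq := capSeq step with hSeqdef
  have hInv : ∀ k, δ < J k (Seq k) := by
    intro k
    induction k with
    | zero =>
      have huniv : Dk 0 (Seq 0) = univ := by ext x; simp [hDk]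
      simp only [hJ]
      rw [huniv, image_univ, hfr]
      exact hδlt
    | succ k ih =>
      have hex := hstep k (Seq k) ih
      have hs1 : Seq (k + 1) = step k (Seq k) := rfl
      have hs2 : step k (Seq k) = Function.update (Seq k) k hex.choose := dif_pos hex
      rw [hs1, hs2]
      exact hex.choose_spec
  have hconsist : ∀ k i, i < k → Seq k i = Seq (i + 1) i := by
    intro k
    induction k with
    | zero => intro i hi; exact absurd hi (Nat.not_lt_zero i)
    | succ k ih =>
      intro i hi
      rcases Nat.lt_succ_iff_lt_or_eq.mp hi with hik | hik
      · have hs1 : Seq (k + 1) = step k (Seq k) := rfl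
        by_cases h : ∃ m, δ < J (k + 1) (Function.update (Seq k) k m)
        · have hs2 : step k (Seq k) = Function.update (Seq k) k h.choose := dif_pos h
          rw [hs1, hs2, Function.update_of_ne (Nat.ne_of_lt hik)]
          exact ih i hik
        · have hs2 : step k (Seq k) = Seq k := dif_neg h
          rw [hs1, hs2]
          exact ih i hik
      · subst hik; rfl
  set σ : ℕ → ℕ := fun i => Seq (i + 1) i with hσdef
  have hDσ : ∀ k, Dk k σ = Dk k (Seq k) := by
    intro k
    ext x
    simp only [hDk, mem_setOf_eq]
    constructor <;> intro h i hi
    · rw [hconsist k i hi]; exact h i hi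
    · show x i ≤ Seq (i + 1) i
      rw [← hconsist k i hi]; exact h i hi
  have hInvσ : ∀ k, δ < ν (Prod.fst '' (f '' Dk k σ)) := by
    intro k
    have := hInv k
    simp only [hJ] at this
    rwa [hDσ k]
  -- the compact set
  set Dinf : Set (ℕ → ℕ) := {x | ∀ i, x i ≤ σ i} with hDinf
  have hDinfc : IsCompact Dinf := by
    have : Dinf = Set.pi univ fun i => Iic (σ i) := by
      ext x
      simp only [hDinf, mem_setOf_eq, Set.mem_univ_pi, mem_Iic]
    rw [this]
    exact isCompact_univ_pi fun i => (Set.finite_Iic (σ i)).isCompact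
  refine ⟨f '' Dinf, hDinfc.image hfc, by rw [← hfr]; exact image_subset_range f Dinf, ?_⟩
  set C : ℕ → Set ℝ := fun k => closure (Prod.fst '' (f '' Dk k σ)) with hC
  have hCanti : Antitone C := by
    intro k k' hkk'
    refine closure_mono (image_mono (image_mono ?_))
    intro x hx i hi
    exact hx i (lt_of_lt_of_le hi hkk')
  have hiInter : ν (⋂ k, C k) = ⨅ k, ν (C k) :=
    hCanti.measure_iInter (fun k => isClosed_closure.measurableSet.nullMeasurableSet)
      ⟨0, measure_ne_top ν _⟩
  have hδle : δ ≤ ν (⋂ k, C k) := by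
    rw [hiInter]
    exact le_iInf fun k => le_of_lt (lt_of_lt_of_le (hInvσ k) (measure_mono subset_closure))
  have hsub : (⋂ k, C k) ⊆ Prod.fst '' (f '' Dinf) := by
    intro t ht
    simp only [mem_iInter] at ht
    have pick : ∀ k, ∃ x, x ∈ Dk k σ ∧ dist ((f x).1) t < 1 / ((k : ℝ) + 1) := by
      intro k
      have h1 : (0 : ℝ) < 1 / ((k : ℝ) + 1) := by positivity
      obtain ⟨b, hb, hbd⟩ := Metric.mem_closure_iff.mp (ht k) _ h1
      obtain ⟨p, hp, rfl⟩ := hb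
      obtain ⟨x, hxD, rfl⟩ := hp
      exact ⟨x, hxD, by rwa [dist_comm]⟩
    choose x hxD hxdist using pick
    set y : ℕ → ℕ → ℕ := fun k i => min (x k i) (σ i) with hy
    have hyD : ∀ k, y k ∈ Dinf := fun k i => min_le_right _ _
    obtain ⟨a, haD, φ, hφ, hconv⟩ := hDinfc.tendsto_subseq hyD
    have hxconv : Tendsto (fun k => x (φ k)) atTop (𝓝 a) := by
      rw [tendsto_pi_nhds] at hconv ⊢
      intro i
      refine (hconv i).congr' ?_
      filter_upwards [eventually_ge_atTop (i + 1)] with k hk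
      have hik : i < φ k := lt_of_lt_of_le (Nat.lt_of_lt_of_le (Nat.lt_succ_self i) hk)
        hφ.le_apply
      show y (φ k) i = x (φ k) i
      exact min_eq_left (hxD (φ k) i hik)
    have hfa : Tendsto (fun k => (f (x (φ k))).1) atTop (𝓝 ((f a).1)) :=
      (continuous_fst.tendsto _).comp ((hfc.tendsto a).comp hxconv)
    have hft : Tendsto (fun k => (f (x (φ k))).1) atTop (𝓝 t) := by
      rw [tendsto_iff_dist_tendsto_zero]
      refine squeeze_zero (fun k => dist_nonneg) (fun k => ?_)
        tendsto_one_div_add_atTop_nhds_zero_nat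
      have h1 : dist ((f (x (φ k))).1) t < 1 / ((φ k : ℝ) + 1) := hxdist (φ k)
      have hkφ : k ≤ φ k := hφ.le_apply
      have h2 : 1 / ((φ k : ℝ) + 1) ≤ 1 / ((k : ℝ) + 1) := by
        apply one_div_le_one_div_of_le
        · positivity
        · have hc : (k : ℝ) ≤ (φ k : ℝ) := Nat.cast_le.mpr hkφ
          linarith
      exact (h1.trans_le h2).le
    have heq : t = (f a).1 := tendsto_nhds_unique hft hfa
    exact ⟨f a, mem_image_of_mem f haD, heq.symm⟩
  exact lt_of_lt_of_le hδpos (hδle.trans (measure_mono hsub))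

open Set Filter Topology in
/-- Measurable selection from a compact subset of `ℝ × ℝ` over its first projection. -/
private lemma cap_selector {K : Set (ℝ × ℝ)} (hK : IsCompact K) :
    ∃ g : ℝ → ℝ, Measurable g ∧ ∀ t ∈ Prod.fst '' K, (t, g t) ∈ K := by
  classical
  set g : ℝ → ℝ := fun t => sInf {y | (t, y) ∈ K} with hg
  have hbdd : ∀ t : ℝ, BddBelow {y | (t, y) ∈ K} := by
    intro t
    obtain ⟨b, hb⟩ : BddBelow (Prod.snd '' K) := (hK.image continuous_snd).bddBelow
    exact ⟨b, fun y hy => hb ⟨(t, y), hy, rfl⟩⟩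
  have hcl : ∀ t : ℝ, IsClosed {y | (t, y) ∈ K} := by
    intro t
    exact IsClosed.preimage (continuous_const.prodMk continuous_id) hK.isClosed
  have hsec : ∀ t ∈ Prod.fst '' K, (t, g t) ∈ K := by
    rintro t ⟨⟨t1, y1⟩, hp, rfl⟩
    have hne : {y | ((t1, y1).1, y) ∈ K}.Nonempty := ⟨y1, hp⟩
    exact (hcl _).csInf_mem hne (hbdd _)
  refine ⟨g, ?_, hsec⟩
  apply measurable_of_Iic
  intro a
  have hKm : MeasurableSet (Prod.fst '' K) :=
    ((hK.image continuous_fst).isClosed).measurableSet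
  have hrepr : g ⁻¹' Iic a =
      (Prod.fst '' (K ∩ univ ×ˢ Iic a)) ∪
        (if (0 : ℝ) ≤ a then (Prod.fst '' K)ᶜ else ∅) := by
    ext t
    by_cases ht : t ∈ Prod.fst '' K
    · simp only [mem_preimage, mem_Iic, mem_union]
      constructor
      · intro hga
        exact Or.inl ⟨(t, g t), ⟨hsec t ht, ⟨trivial, hga⟩⟩, rfl⟩
      · intro h
        rcases h with ⟨p, ⟨hpK, _, hpa⟩, hp1⟩ | h
        · have hmem : p.2 ∈ {y | (t, y) ∈ K} := by
            show (t, p.2) ∈ K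
            have : (t, p.2) = p := by
              rw [← hp1]
            rw [this]
            exact hpK
          exact (csInf_le (hbdd t) hmem).trans hpa
        · split_ifs at h with h0
          · exact absurd ht h
          · exact absurd h (notMem_empty t)
    · have hsece : {y | (t, y) ∈ K} = ∅ := by
        ext y
        simp only [mem_setOf_eq, mem_empty_iff_false, iff_false]
        intro hy
        exact ht ⟨(t, y), hy, rfl⟩
      have hgt : g t = 0 := by
        rw [hg]
        show sInf {y | (t, y) ∈ K} = 0
        rw [hsece, Real.sInf_empty]
      simp only [mem_preimage, mem_Iic, hgt, mem_union]
      constructor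
      · intro h0a
        right
        rw [if_pos h0a]
        exact ht
      · intro h
        rcases h with ⟨p, ⟨hpK, _, _⟩, hp1⟩ | h
        · exact absurd ⟨p, hpK, hp1⟩ ht
        · split_ifs at h with h0
          · exact h0
          · exact absurd h (notMem_empty t)
  rw [hrepr]
  apply MeasurableSet.union
  · exact (((hK.inter_right (isClosed_univ.prod isClosed_Iic)).image
      continuous_fst).isClosed).measurableSet
  · split_ifs
    · exact hKm.compl
    · exact MeasurableSet.empty

open Set in
/-- A measurable embedding into `ℝ` admits a measurable retraction. -/
private lemma meas_retraction {X : Type*} [MeasurableSpace X] {e : X → ℝ}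
    (he : MeasurableEmbedding e) (x₀ : X) :
    ∃ r : ℝ → X, Measurable r ∧ ∀ x, r (e x) = x := by
  classical
  set r : ℝ → X := fun t => if h : ∃ x, e x = t then h.choose else x₀ with hr
  have hre : ∀ x, r (e x) = x := by
    intro x
    have hex : ∃ x', e x' = e x := ⟨x, rfl⟩
    rw [hr]
    simp only [dif_pos hex]
    exact he.injective hex.choose_spec
  refine ⟨r, ?_, hre⟩
  intro W hW
  have hrepr : r ⁻¹' W = (e '' W) ∪ (if x₀ ∈ W then (Set.range e)ᶜ else ∅) := by
    ext t
    by_cases htr : t ∈ Set.range e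
    · obtain ⟨x, rfl⟩ := htr
      simp only [mem_preimage, hre x, mem_union]
      constructor
      · intro hx
        exact Or.inl ⟨x, hx, rfl⟩
      · intro h
        rcases h with ⟨w, hw, hwe⟩ | h
        · rwa [← he.injective hwe]
        · split_ifs at h with h0
          · exact absurd ⟨x, rfl⟩ h
          · exact absurd h (notMem_empty _)
    · have hrt : r t = x₀ := by
        rw [hr]
        have : ¬∃ x, e x = t := by
          intro ⟨x, hx⟩
          exact htr ⟨x, hx⟩
        simp only [dif_neg this]
      simp only [mem_preimage, hrt, mem_union]
      constructor
      · intro h0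
        right
        rw [if_pos h0]
        exact htr
      · intro h
        rcases h with ⟨w, _, hwe⟩ | h
        · exact absurd ⟨w, hwe⟩ htr
        · split_ifs at h with h0
          · exact h0
          · exact absurd h (notMem_empty _)
  rw [hrepr]
  apply MeasurableSet.union
  · exact he.measurableSet_image' hW
  · split_ifs
    · exact he.measurableSet_range.compl
    · exact MeasurableSet.empty

/-- The asymptotic range `r*(c)` of a cocycle `c` on an equivalence relation `R`:
`γ ∈ r*(c)` iff for every neighbourhood `U` of `γ` and every measurable set `A` of
positive measure there are a positive-measure measurable `B ⊆ A` and a measurable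
`T : B → A` with graph in `R` such that `c(x, Tx) ∈ U` for all `x ∈ B`. -/
def asymptoticRange {X Γ : Type*} [MeasurableSpace X] [TopologicalSpace Γ] [CommGroup Γ]
    (μ : Measure X) (R : X → X → Prop) (c : X → X → Γ) : Set Γ :=
  {γ | ∀ U ∈ nhds γ, ∀ A : Set X, MeasurableSet A → 0 < μ A →
    ∃ B : Set X, B ⊆ A ∧ MeasurableSet B ∧ 0 < μ B ∧
      ∃ T : X → X, Measurable T ∧ ∀ x ∈ B, T x ∈ A ∧ R x (T x) ∧ c x (T x) ∈ U}

/-- for a measurable cocycle `c` on an ergodic countable measurable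
equivalence relation `R` on a standard measure space, with values in an abelian
second countable locally compact group `Γ`, the asymptotic range `r*(c)` is a closed
subgroup of `Γ`. -/
theorem asymptoticRange_isClosed_subgroup
    {X Γ : Type*} [MeasurableSpace X] [StandardBorelSpace X]
    (μ : Measure X) [SigmaFinite μ]
    [CommGroup Γ] [TopologicalSpace Γ] [IsTopologicalGroup Γ]
    [SecondCountableTopology Γ] [LocallyCompactSpace Γ] [MeasurableSpace Γ] [BorelSpace Γ]
    (R : X → X → Prop) (hequiv : Equivalence R)
    (hcount : ∀ x, {y | R x y}.Countable)
    (hmeas : MeasurableSet {p : X × X | R p.1 p.2})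
    (herg : ∀ S : Set X, MeasurableSet S → (∀ x y, R x y → (x ∈ S ↔ y ∈ S)) →
      μ S = 0 ∨ μ Sᶜ = 0)
    (c : X → X → Γ) (hcmeas : Measurable fun p : X × X => c p.1 p.2)
    (hcocycle : ∀ x y z, R x y → R y z → c x y * c y z = c x z) :
    ∃ H : Subgroup Γ, IsClosed (H : Set Γ) ∧ (H : Set Γ) = asymptoticRange μ R c := by
  classical
  -- basic cocycle identities
  have hone : ∀ x, c x x = 1 := by
    intro x
    have h := hcocycle x x x (hequiv.refl x) (hequiv.refl x)
    have h2 : c x x * c x x = c x x * 1 := by rw [mul_one]; exact h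
    exact mul_left_cancel h2
  have hcinv : ∀ x y, R x y → c y x = (c x y)⁻¹ := by
    intro x y h
    have h1 := hcocycle x y x h (hequiv.symm h)
    rw [hone] at h1
    exact eq_inv_of_mul_eq_one_right h1
  -- membership of 1
  have honemem : (1 : Γ) ∈ asymptoticRange μ R c := by
    intro U hU A hAm hApos
    exact ⟨A, subset_rfl, hAm, hApos, id, measurable_id, fun x hx =>
      ⟨hx, hequiv.refl x, by
        have hid : c x (id x) = 1 := hone x
        rw [hid]; exact mem_of_mem_nhds hU⟩⟩
  -- closed under multiplication
  have hmulmem : ∀ γ₁ γ₂ : Γ, γ₁ ∈ asymptoticRange μ R c → γ₂ ∈ asymptoticRange μ R c →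
      γ₁ * γ₂ ∈ asymptoticRange μ R c := by
    intro γ₁ γ₂ h1 h2 U hU A hAm hApos
    have hcont : Filter.Tendsto (fun p : Γ × Γ => p.1 * p.2) (nhds (γ₁, γ₂))
        (nhds (γ₁ * γ₂)) := continuous_mul.tendsto (γ₁, γ₂)
    have hpre : (fun p : Γ × Γ => p.1 * p.2) ⁻¹' U ∈ nhds (γ₁, γ₂) := hcont hU
    rw [mem_nhds_prod_iff] at hpre
    obtain ⟨s, hs, t, ht, hst⟩ := hpre
    obtain ⟨B₁, hB₁A, hB₁m, hB₁pos, T₁, hT₁m, hT₁⟩ := h1 s hs A hAm hApos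
    obtain ⟨B₂, hB₂B₁, hB₂m, hB₂pos, T₂, hT₂m, hT₂⟩ := h2 t ht B₁ hB₁m hB₁pos
    refine ⟨B₂, hB₂B₁.trans hB₁A, hB₂m, hB₂pos, T₁ ∘ T₂, hT₁m.comp hT₂m, fun x hx => ?_⟩
    obtain ⟨hxB₁, hxR, hxc⟩ := hT₂ x hx
    obtain ⟨hyA, hyR, hyc⟩ := hT₁ _ hxB₁
    refine ⟨hyA, hequiv.trans hxR hyR, ?_⟩
    have hco : c x (T₂ x) * c (T₂ x) (T₁ (T₂ x)) = c x ((T₁ ∘ T₂) x) :=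
      hcocycle _ _ _ hxR hyR
    have hmem : (c (T₂ x) (T₁ (T₂ x)), c x (T₂ x)) ∈ s ×ˢ t := ⟨hyc, hxc⟩
    have hprod := hst hmem
    show c x ((T₁ ∘ T₂) x) ∈ U
    rw [← hco, mul_comm]
    exact hprod
  -- closed under inverses (the hard part)
  have hinvmem : ∀ γ : Γ, γ ∈ asymptoticRange μ R c → γ⁻¹ ∈ asymptoticRange μ R c := by
    intro γ hγ U hU A hAm hApos
    -- shrink `A` to a finite-measure set
    obtain ⟨A₂, hA₂m, hA₂A, hA₂pos, hA₂fin⟩ := Measure.exists_subset_measure_lt_top hAm hApos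
    -- an open neighbourhood inside U
    set V := interior U with hVdef
    have hVo : IsOpen V := isOpen_interior
    have hγV : γ⁻¹ ∈ V := mem_interior_iff_mem_nhds.mpr hU
    -- the set of good pairs
    set S : Set (X × X) := (Prod.fst ⁻¹' A₂) ∩ (Prod.snd ⁻¹' A₂) ∩
      ({p : X × X | R p.1 p.2} ∩ ((fun p : X × X => c p.1 p.2) ⁻¹' V)) with hSdef
    have hSm : MeasurableSet S :=
      ((measurable_fst hA₂m).inter (measurable_snd hA₂m)).inter
        (hmeas.inter (hcmeas hVo.measurableSet))
    set D := Prod.fst '' S with hDdef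
    -- `D` has full outer measure in `A₂`
    have hhull : ∀ W : Set X, MeasurableSet W → D ⊆ W → 0 < μ (A₂ ∩ W) := by
      intro W hWm hDW
      by_contra hcon
      have hW0 : μ (A₂ ∩ W) = 0 := by
        rcases (zero_le : (0 : ENNReal) ≤ μ (A₂ ∩ W)).eq_or_lt with h | h
        · exact h.symm
        · exact absurd h hcon
      have hdiffpos : 0 < μ (A₂ \ W) := by
        have heq : A₂ \ W = A₂ \ (A₂ ∩ W) := by
          ext z; simp only [Set.mem_diff, Set.mem_inter_iff]; tauto
        rw [heq, measure_diff_null hW0]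
        exact hA₂pos
      have hV'o : IsOpen ((fun g : Γ => g⁻¹) ⁻¹' V) := hVo.preimage continuous_inv
      have hγV' : γ ∈ (fun g : Γ => g⁻¹) ⁻¹' V := by
        show γ⁻¹ ∈ V
        exact hγV
      obtain ⟨B, hBsub, hBm, hBpos, T, hTm, hT⟩ :=
        hγ _ (hV'o.mem_nhds hγV') (A₂ \ W) (hA₂m.diff hWm) hdiffpos
      obtain ⟨z, hz⟩ := nonempty_of_measure_ne_zero hBpos.ne'
      obtain ⟨hTz, hRz, hcz⟩ := hT z hz
      have hzA₂ : z ∈ A₂ := (hBsub hz).1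
      have hmemS : (T z, z) ∈ S := by
        refine ⟨⟨hTz.1, hzA₂⟩, ⟨hequiv.symm hRz, ?_⟩⟩
        show c (T z) z ∈ V
        rw [hcinv _ _ hRz]
        exact hcz
      have hTzD : T z ∈ D := ⟨(T z, z), hmemS, rfl⟩
      exact hTz.2 (hDW hTzD)
    -- embed X into ℝ
    obtain ⟨e, he⟩ := MeasureTheory.exists_measurableEmbedding_real X
    set ν := Measure.map e (μ.restrict A₂) with hνdef
    haveI : IsFiniteMeasure ν := by
      constructor
      have happ : ν Set.univ = μ.restrict A₂ (e ⁻¹' Set.univ) :=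
        Measure.map_apply he.measurable MeasurableSet.univ
      rw [happ, Set.preimage_univ, Measure.restrict_apply_univ]
      exact hA₂fin
    set F : X × X → ℝ × ℝ := fun p => (e p.1, e p.2) with hFdef
    have hF : MeasurableEmbedding F := he.prodMap he
    set S' := F '' S with hS'def
    have hS'm : MeasurableSet S' := hF.measurableSet_image' hSm
    have hfst : Prod.fst '' S' = e '' D := by
      ext t
      constructor
      · rintro ⟨q, ⟨p, hpS, rfl⟩, rfl⟩
        exact ⟨p.1, ⟨p, hpS, rfl⟩, rfl⟩
      · rintro ⟨d, ⟨p, hpS, rfl⟩, rfl⟩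
        exact ⟨F p, ⟨p, hpS, rfl⟩, rfl⟩
    have hνpos : 0 < ν (Prod.fst '' S') := by
      rw [hfst]
      rcases (zero_le : (0 : ENNReal) ≤ ν (e '' D)).eq_or_lt with h0 | h0
      · exfalso
        set W' := toMeasurable ν (e '' D) with hW'def
        have hW'm : MeasurableSet W' := measurableSet_toMeasurable ν _
        have hνW' : ν W' = 0 := by
          rw [hW'def, measure_toMeasurable]
          exact h0.symm
        have hμW' : μ (A₂ ∩ e ⁻¹' W') = 0 := by
          have happ : ν W' = μ.restrict A₂ (e ⁻¹' W') :=
            Measure.map_apply he.measurable hW'm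
          rw [Measure.restrict_apply (he.measurable hW'm)] at happ
          rw [Set.inter_comm]
          rw [← happ]
          exact hνW'
        have hDsub : D ⊆ e ⁻¹' W' := fun d hd =>
          subset_toMeasurable ν _ (Set.mem_image_of_mem e hd)
        have := hhull (e ⁻¹' W') (he.measurable hW'm) hDsub
        rw [hμW'] at this
        exact lt_irrefl _ this
      · exact h0
    obtain ⟨K, hKc, hKS', hKpos⟩ := cap_lemma ν hS'm hνpos
    obtain ⟨g, hgm, hgsel⟩ := cap_selector hKc
    obtain ⟨x₀, hx₀⟩ : A₂.Nonempty := nonempty_of_measure_ne_zero hA₂pos.ne'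
    obtain ⟨r, hrm, hre⟩ := meas_retraction he x₀
    have hKfm : MeasurableSet (Prod.fst '' K) :=
      ((hKc.image continuous_fst).isClosed).measurableSet
    refine ⟨A₂ ∩ e ⁻¹' (Prod.fst '' K), fun x hx => hA₂A hx.1,
      hA₂m.inter (he.measurable hKfm), ?_, r ∘ g ∘ e,
      hrm.comp (hgm.comp he.measurable), ?_⟩
    · have heq : ν (Prod.fst '' K) = μ (A₂ ∩ e ⁻¹' (Prod.fst '' K)) := by
        rw [hνdef, Measure.map_apply he.measurable hKfm,
          Measure.restrict_apply (he.measurable hKfm), Set.inter_comm]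
      rw [← heq]
      exact hKpos
    · intro x hx
      obtain ⟨hxA₂, hxK⟩ := hx
      have h1 : (e x, g (e x)) ∈ K := hgsel _ hxK
      have h2 : (e x, g (e x)) ∈ S' := hKS' h1
      obtain ⟨p, hpS, hpe⟩ := h2
      have hp1 : p.1 = x := he.injective (congrArg Prod.fst hpe)
      have hp2 : g (e x) = e p.2 := (congrArg Prod.snd hpe).symm
      have hTx : (r ∘ g ∘ e) x = p.2 := by
        show r (g (e x)) = p.2
        rw [hp2, hre]
      obtain ⟨⟨hp1A, hp2A⟩, hpR, hpc⟩ := hpS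
      rw [hTx]
      refine ⟨hA₂A hp2A, ?_, ?_⟩
      · rw [← hp1]; exact hpR
      · have : c p.1 p.2 ∈ V := hpc
        rw [← hp1]
        exact interior_subset this
  -- closedness
  have hclosed : IsClosed (asymptoticRange μ R c) := by
    refine isClosed_of_closure_subset fun γ hγ => ?_
    intro U hU A hAm hApos
    have hγint : γ ∈ interior U := mem_interior_iff_mem_nhds.mpr hU
    obtain ⟨γ', hγ'int, hγ'mem⟩ :=
      _root_.mem_closure_iff.mp hγ (interior U) isOpen_interior hγint
    obtain ⟨B, hBA, hBm, hBpos, T, hTm, hT⟩ :=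
      hγ'mem (interior U) (isOpen_interior.mem_nhds hγ'int) A hAm hApos
    exact ⟨B, hBA, hBm, hBpos, T, hTm, fun x hx =>
      ⟨(hT x hx).1, (hT x hx).2.1, interior_subset (hT x hx).2.2⟩⟩
  exact ⟨{ carrier := asymptoticRange μ R c
           one_mem' := honemem
           mul_mem' := fun {a b} ha hb => hmulmem a b ha hb
           inv_mem' := fun {a} ha => hinvmem a ha }, hclosed, rfl⟩
end

section
/- Let {(X_n, μ_n)}_{n≥1} be a sequence of at most countable probability spaces, (X,μ) their product, and 𝓡 the tail equivalence relation on X (x ∼ y iff x_n = y_n for all but finitely many n). A Γ-valued 1-cocycle c on 𝓡 is of product type if and only if c is constant on each set {(x,y) ∈ 𝓡 : x_n = a, y_n = b, x_m = y_m for all m ≠ n}, for every n ∈ ℕ and a,b ∈ X_n. -/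
open MeasureTheory

/-- on the tail equivalence relation of a countable product, a `Γ`-valued
`1`-cocycle `c` is of product type (i.e. `c(x,y) = ∏ₙ θₙ(yₙ)·θₙ(xₙ)⁻¹` for some maps
`θₙ : Xₙ → Γ`) if and only if `c` is constant on each of the sets
`{(x,y) ∈ 𝓡 : xₙ = a, yₙ = b, xₘ = yₘ for m ≠ n}`. -/
theorem productType_iff_constant_on_elementary_sets
    {X : ℕ → Type*} [∀ n, Countable (X n)] [∀ n, Nonempty (X n)]
    {Γ : Type*} [CommGroup Γ]
    (R : (∀ n, X n) → (∀ n, X n) → Prop)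
    (hR : ∀ x y, R x y ↔ {n | x n ≠ y n}.Finite)
    (c : (∀ n, X n) → (∀ n, X n) → Γ)
    (hcocycle : ∀ x y z, R x y → R y z → c x y * c y z = c x z) :
    (∃ θ : ∀ n, X n → Γ, ∀ x y, R x y →
        c x y = ∏ᶠ n, θ n (y n) * (θ n (x n))⁻¹)
      ↔ (∀ (n : ℕ) (a b : X n), ∀ x y x' y' : ∀ m, X m,
          (x n = a ∧ y n = b ∧ ∀ m, m ≠ n → x m = y m) →
          (x' n = a ∧ y' n = b ∧ ∀ m, m ≠ n → x' m = y' m) →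
          c x y = c x' y') := by
  constructor
  · rintro ⟨θ, hθ⟩ n a b x y x' y' ⟨hxa, hyb, hxy⟩ ⟨hxa', hyb', hxy'⟩
    have key : ∀ u v : ∀ m, X m, u n = a → v n = b → (∀ m, m ≠ n → u m = v m) →
        c u v = θ n b * (θ n a)⁻¹ := by
      intro u v hu hv huv
      have hRuv : R u v := (hR u v).2 <| (Set.finite_singleton n).subset fun m hm => by
        simp only [Set.mem_setOf_eq] at hm
        by_contra h
        exact hm (huv m (by simpa using h))
      rw [hθ u v hRuv,
        finprod_eq_single _ n (fun m hm => by rw [huv m hm]; simp), hu, hv]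
    rw [key x y hxa hyb hxy, key x' y' hxa' hyb' hxy']
  · intro hconst
    obtain ⟨e⟩ : Nonempty (∀ n, X n) := ⟨fun n => Classical.arbitrary _⟩
    have hRrefl : ∀ x, R x x := fun x => (hR x x).2 (by simp)
    have hcxx : ∀ x, c x x = 1 := fun x =>
      mul_left_cancel (a := c x x)
        (by rw [hcocycle x x x (hRrefl x) (hRrefl x), mul_one])
    have hRsymm : ∀ x y, R x y → R y x := fun x y h =>
      (hR y x).2 <| ((hR x y).1 h).subset fun m hm => Ne.symm hm
    have hinv : ∀ x y, R x y → c y x = (c x y)⁻¹ := by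
      intro x y h
      have h1 : c x y * c y x = 1 := by
        rw [hcocycle x y x h (hRsymm x y h), hcxx]
      exact eq_inv_of_mul_eq_one_left (by rw [mul_comm]; exact h1)
    set θ : ∀ n, X n → Γ := fun n a => c e (Function.update e n a) with hθdef
    have hRupd : ∀ n (a : X n), R e (Function.update e n a) := fun n a =>
      (hR _ _).2 <| (Set.finite_singleton n).subset fun m hm => by
        simp only [Set.mem_setOf_eq] at hm
        by_contra h
        exact hm (Function.update_of_ne (by simpa using h) a e).symm
    have single : ∀ (n : ℕ) (u v : ∀ m, X m), (∀ m, m ≠ n → u m = v m) →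
        c u v = θ n (v n) * (θ n (u n))⁻¹ := by
      intro n u v huv
      have h1 : c u v = c (Function.update e n (u n)) (Function.update e n (v n)) :=
        hconst n (u n) (v n) u v _ _ ⟨rfl, rfl, huv⟩
          ⟨Function.update_self _ _ _, Function.update_self _ _ _, fun m hm => by
            rw [Function.update_of_ne hm, Function.update_of_ne hm]⟩
      have h2 := hcocycle (Function.update e n (u n)) e (Function.update e n (v n))
        (hRsymm _ _ (hRupd n (u n))) (hRupd n (v n))
      rw [h1, ← h2, hinv _ _ (hRupd n (u n))]
      simp only [hθdef]
      exact mul_comm _ _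
    have main : ∀ (s : Finset ℕ) (x y : ∀ m, X m), {m | x m ≠ y m} ⊆ ↑s →
        c x y = ∏ n ∈ s, θ n (y n) * (θ n (x n))⁻¹ := by
      intro s
      induction s using Finset.induction with
      | empty =>
        intro x y h
        have hxy : x = y := funext fun m => by
          by_contra hm
          simpa using h hm
        rw [hxy, hcxx, Finset.prod_empty]
      | insert n s hn ih =>
        intro x y h
        set z : ∀ m, X m := Function.update x n (y n) with hz
        have hxz : ∀ m, m ≠ n → x m = z m := fun m hm =>
          (Function.update_of_ne hm _ _).symm
        have hzn : z n = y n := Function.update_self _ _ _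
        have hzy : {m | z m ≠ y m} ⊆ ↑s := by
          intro m hm
          simp only [Set.mem_setOf_eq] at hm
          have hmn : m ≠ n := fun he => hm (he ▸ hzn)
          have : x m ≠ y m := (hxz m hmn) ▸ hm
          have := h this
          simp only [Finset.coe_insert, Set.mem_insert_iff] at this
          rcases this with h' | h'
          · exact absurd h' hmn
          · exact h'
        have hRxz : R x z := (hR _ _).2 <| (Set.finite_singleton n).subset
          fun m hm => by
            simp only [Set.mem_setOf_eq] at hm
            by_contra hc
            exact hm (hxz m (by simpa using hc))
        have hRzy : R z y := (hR _ _).2 <| s.finite_toSet.subset hzy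
        have hstep : c x y = c x z * c z y := (hcocycle x z y hRxz hRzy).symm
        rw [hstep, single n x z (fun m hm => hxz m hm), hzn, ih z y hzy,
          Finset.prod_insert hn]
        congr 1
        exact Finset.prod_congr rfl fun m hm => by
          rw [hxz m (fun he => hn (he ▸ hm))]
    refine ⟨θ, fun x y hxy => ?_⟩
    have hf : {m | x m ≠ y m}.Finite := (hR x y).1 hxy
    rw [finprod_eq_prod_of_mulSupport_subset _
      (s := hf.toFinset) (fun m hm => by
        simp only [Set.Finite.coe_toFinset, Set.mem_setOf_eq]
        intro hc
        exact hm (by simp [Function.mulSupport, hc] at hm ⊢)),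
      main hf.toFinset x y (by simp)]
end
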